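/- For q ∈ [0,1], μ > 0, and m ≥ 2, the zero-accumulation probability combined with fresh Poisson arrivals satisfies: if the non-empty probability in slot 2 is T² = 1 - e^{-μ₂}(e^{-μ₁} + μ₁ e^{-μ₁} q) (exact probabilistic statistics), and the Poisson approximation gives T̃² = 1 - e^{-μ₂ - (μ₁ - q(1-e^{-μ₁}))}, then T² ≤ T̃², i.e., the Poisson approximation overestimates the non-empty probability. -/

import Mathlib

open Real

lemma exp_qa_le (q a : ℝ) (hq0 : 0 ≤ q) (hq1 : q ≤ 1) :
    Real.exp (q * a) ≤ 1 + q * (Real.exp a - 1) := by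
  have h := convexOn_exp.2 (Set.mem_univ (0:ℝ)) (Set.mem_univ a)
    (by linarith : (0:ℝ) ≤ 1 - q) hq0 (by ring)
  calc Real.exp (q*a) = Real.exp ((1-q)*0 + q*a) := by ring_nf
    _ ≤ (1-q)*Real.exp 0 + q*Real.exp a := h
    _ = 1 + q*(Real.exp a - 1) := by rw [Real.exp_zero]; ring
  
lemma log_bound (μ : ℝ) (hμ : 0 ≤ μ) : 1 - Real.exp (-μ) ≤ Real.log (1 + μ) := by
  set f : ℝ → ℝ := fun y => Real.log (1+y) - 1 + Real.exp (-y) with hf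
  have key : ∀ x : ℝ, 0 ≤ x → HasDerivAt f (1/(1+x) - Real.exp (-x)) x := by
    intro x hx
    have h1 : HasDerivAt (fun y:ℝ => 1+y) 1 x := (hasDerivAt_id x).const_add 1
    have h2 : HasDerivAt (fun y => Real.log (1+y)) (1/(1+x)) x := by
      have := (Real.hasDerivAt_log (by linarith : (1:ℝ)+x ≠ 0)).comp x h1
      simpa [one_div, Function.comp_def] using this
    have h3 : HasDerivAt (fun y:ℝ => Real.exp (-y)) (-Real.exp (-x)) x := by
      have := (Real.hasDerivAt_exp (-x)).comp x ((hasDerivAt_id x).neg)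
      simpa [Function.comp_def] using this
    have := (h2.sub_const 1).add h3
    simpa [hf, sub_eq_add_neg, Pi.add_def] using this
  have hmono : MonotoneOn f (Set.Ici 0) := by
    apply monotoneOn_of_deriv_nonneg (convex_Ici 0)
    · exact fun x hx => (key x hx).continuousAt.continuousWithinAt
    · intro x hx
      rw [interior_Ici] at hx
      exact (key x hx.le).differentiableAt.differentiableWithinAt
    · intro x hx
      rw [interior_Ici] at hx
      rw [(key x hx.le).deriv]
      have hpos : (0:ℝ) < 1 + x := by linarith [(Set.mem_Ioi.1 hx).le]
      have := Real.add_one_le_exp x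
      have h5 : Real.exp (-x) ≤ 1/(1+x) := by
        rw [Real.exp_neg, inv_le_comm₀ (Real.exp_pos x) (by positivity)]
        rw [one_div, inv_inv]
        linarith
      linarith
  have h0 : f 0 ≤ f μ := hmono (Set.mem_Ici.2 le_rfl) (Set.mem_Ici.2 hμ) hμ
  simp only [hf, Real.log_one, Real.exp_zero, add_zero, neg_zero] at h0
  linarith [h0]

lemma key (μ : ℝ) (hμ : 0 ≤ μ) : Real.exp (1 - Real.exp (-μ)) ≤ 1 + μ := by
  have h1 : (0:ℝ) < 1 + μ := by linarith
  calc Real.exp (1 - Real.exp (-μ)) ≤ Real.exp (Real.log (1+μ)) :=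
        Real.exp_le_exp.2 (log_bound μ hμ)
    _ = 1 + μ := Real.exp_log h1

lemma main_ineq (μ q : ℝ) (hμ : 0 ≤ μ) (hq0 : 0 ≤ q) (hq1 : q ≤ 1) :
    Real.exp (-(μ - q * (1 - Real.exp (-μ)))) ≤ Real.exp (-μ) * (1 + μ * q) := by
  have h1 : Real.exp (q * (1 - Real.exp (-μ))) ≤ 1 + μ * q := by
    calc Real.exp (q * (1 - Real.exp (-μ)))
        ≤ 1 + q * (Real.exp (1 - Real.exp (-μ)) - 1) := exp_qa_le q _ hq0 hq1
      _ ≤ 1 + μ * q := by nlinarith [key μ hμ]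
  have : Real.exp (-(μ - q * (1 - Real.exp (-μ))))
      = Real.exp (-μ) * Real.exp (q * (1 - Real.exp (-μ))) := by
    rw [← Real.exp_add]; ring_nf
  rw [this]
  exact mul_le_mul_of_nonneg_left h1 (Real.exp_pos _).le

/-- The Poisson approximation overestimates the non-empty probability:
`1 - e^{-μ₂}(e^{-μ₁} + μ₁ e^{-μ₁} q) ≤ 1 - e^{-μ₂ - (μ₁ - q(1-e^{-μ₁}))}`,
equivalently `e^{-μ₁}(1 + μ₁ q) ≥ e^{-(μ₁ - q(1 - e^{-μ₁}))}`. -/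
theorem poisson_approx_overestimates (μ₁ μ₂ q : ℝ)
    (hμ₁ : 0 ≤ μ₁) (hμ₂ : 0 ≤ μ₂) (hq0 : 0 ≤ q) (hq1 : q ≤ 1) :
    (Real.exp (-μ₁) * (1 + μ₁ * q) ≥ Real.exp (-(μ₁ - q * (1 - Real.exp (-μ₁))))) ∧
    (1 - Real.exp (-μ₂) * (Real.exp (-μ₁) + μ₁ * Real.exp (-μ₁) * q)
      ≤ 1 - Real.exp (-μ₂ - (μ₁ - q * (1 - Real.exp (-μ₁))))) := by
  have h := main_ineq μ₁ q hμ₁ hq0 hq1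
  refine ⟨h, ?_⟩
  have h2 : Real.exp (-μ₂ - (μ₁ - q * (1 - Real.exp (-μ₁))))
      = Real.exp (-μ₂) * Real.exp (-(μ₁ - q * (1 - Real.exp (-μ₁)))) := by
    rw [← Real.exp_add]; ring_nf
  rw [h2]
  have h3 : Real.exp (-μ₂) * Real.exp (-(μ₁ - q * (1 - Real.exp (-μ₁))))
      ≤ Real.exp (-μ₂) * (Real.exp (-μ₁) * (1 + μ₁ * q)) :=
    mul_le_mul_of_nonneg_left h (Real.exp_pos _).le
  nlinarith [h3]
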